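/- arXiv:2202.00940 — 3 statements merged into one kernel-verified Lean document; each statement's English description precedes it below -/
import Mathlib

section
/- Let φ ∈ L²(ℝ) be a Schwartz function (or φ in the Schwartz class), m ≥ 1, and suppose x^m φ ∈ L² and the m-th derivative φ^{(m)} ∈ L². Then ‖φ‖² ≤ 2^m ‖x^m φ‖ · ‖φ^{(m)}‖. -/
open MeasureTheory Complex Filter

namespace GenUncertainty

/-- Cauchy–Schwarz for integrals of nonnegative functions. -/
lemma cauchy_schwarz (f g : ℝ → ℝ) (hf : ∀ x, 0 ≤ f x) (hg : ∀ x, 0 ≤ g x)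
    (hfm : AEStronglyMeasurable f volume) (hgm : AEStronglyMeasurable g volume)
    (hf2 : Integrable (fun x => f x ^ 2)) (hg2 : Integrable (fun x => g x ^ 2)) :
    ∫ x, f x * g x ≤ Real.sqrt (∫ x, f x ^ 2) * Real.sqrt (∫ x, g x ^ 2) := by
  have h22 : (2:ℝ).HolderConjugate 2 := Real.HolderConjugate.two_two
  have hof : ENNReal.ofReal (2:ℝ) = 2 := by norm_num [ENNReal.ofReal_ofNat]
  have hF : MemLp f (ENNReal.ofReal (2:ℝ)) volume := by
    rw [hof]; exact (memLp_two_iff_integrable_sq hfm).2 hf2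
  have hG : MemLp g (ENNReal.ofReal (2:ℝ)) volume := by
    rw [hof]; exact (memLp_two_iff_integrable_sq hgm).2 hg2
  have := integral_mul_le_Lp_mul_Lq_of_nonneg h22
    (Eventually.of_forall hf) (Eventually.of_forall hg) hF hG
  calc ∫ x, f x * g x ≤ (∫ x, f x ^ (2:ℝ)) ^ ((1:ℝ)/2) * (∫ x, g x ^ (2:ℝ)) ^ ((1:ℝ)/2) := this
    _ = _ := by
        rw [← Real.sqrt_eq_rpow, ← Real.sqrt_eq_rpow]
        norm_num [Real.rpow_natCast]

lemma int_pow_mul (f g : SchwartzMap ℝ ℂ) (k : ℕ) :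
    Integrable (fun x => |x| ^ k * (‖f x‖ * ‖g x‖)) volume := by
  obtain ⟨C, hC⟩ := f.decay 0 0
  have hC' : ∀ x, ‖f x‖ ≤ C := fun x => by simpa using hC.2 x
  refine (((g.integrable_pow_mul volume k).const_mul C).mono'
    (((_root_.continuous_abs.pow k : Continuous fun x:ℝ => |x|^k)).mul
      (f.continuous.norm.mul g.continuous.norm)).aestronglyMeasurable
    (Eventually.of_forall fun x => ?_))
  have h1 : 0 ≤ |x| ^ k * (‖f x‖ * ‖g x‖) := by positivity
  rw [Real.norm_of_nonneg h1]
  calc |x| ^ k * (‖f x‖ * ‖g x‖) ≤ |x| ^ k * (C * ‖g x‖) := by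
        gcongr
        exact hC' x
    _ = C * (‖x‖ ^ k * ‖g x‖) := by rw [Real.norm_eq_abs]; ring

lemma int_mul_schwartz (f g : SchwartzMap ℝ ℂ) :
    Integrable (fun x => ‖f x‖ * ‖g x‖) volume := by
  have := int_pow_mul f g 0
  simpa using this

lemma int_conj_mul (f g : SchwartzMap ℝ ℂ) :
    Integrable (fun x => (starRingEnd ℂ) (f x) * g x) volume := by
  refine (int_mul_schwartz f g).mono'
    (((continuous_conj).comp f.continuous).mul g.continuous).aestronglyMeasurable ?_
  refine Eventually.of_forall fun x => ?_
  simp [norm_mul]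

lemma int_sq_pow (f : SchwartzMap ℝ ℂ) (k : ℕ) :
    Integrable (fun x => (|x| ^ k * ‖f x‖) ^ 2) volume := by
  have := int_pow_mul f f (2 * k)
  refine this.congr (Eventually.of_forall fun x => ?_)
  ring

lemma schwartz_hasDerivAt (f : SchwartzMap ℝ ℂ) (x : ℝ) :
    HasDerivAt (⇑f) (SchwartzMap.derivCLM ℝ ℂ f x) x := by
  rw [SchwartzMap.derivCLM_apply]
  exact f.differentiable.differentiableAt.hasDerivAt

/-- Step B: `‖g'‖² ≤ ‖g‖ ‖g''‖` in L². -/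
lemma stepB (g : SchwartzMap ℝ ℂ) :
    (∫ x : ℝ, ‖SchwartzMap.derivCLM ℝ ℂ g x‖ ^ 2) ≤
      Real.sqrt (∫ x : ℝ, ‖g x‖ ^ 2) *
        Real.sqrt (∫ x : ℝ, ‖SchwartzMap.derivCLM ℝ ℂ (SchwartzMap.derivCLM ℝ ℂ g) x‖ ^ 2) := by
  set g1 := SchwartzMap.derivCLM ℝ ℂ g with hg1
  set g2 := SchwartzMap.derivCLM ℝ ℂ g1 with hg2
  have hu : ∀ x, HasDerivAt (fun x => (starRingEnd ℂ) (g x)) ((starRingEnd ℂ) (g1 x)) x :=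
    fun x => (schwartz_hasDerivAt g x).star
  have hv : ∀ x, HasDerivAt (⇑g1) (g2 x) x := fun x => schwartz_hasDerivAt g1 x
  have hparts : (∫ x : ℝ, (starRingEnd ℂ) (g x) * g2 x)
      = - ∫ x : ℝ, (starRingEnd ℂ) (g1 x) * g1 x := by
    have := integral_mul_deriv_eq_deriv_mul_of_integrable (fun x _ => hu x) (fun x _ => hv x)
      (int_conj_mul g g2) (int_conj_mul g1 g1) (int_conj_mul g g1)
    simpa using this
  have hre : (∫ x : ℝ, ‖g1 x‖ ^ 2) = (∫ x : ℝ, (starRingEnd ℂ) (g1 x) * g1 x).re := by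
    rw [← RCLike.re_to_complex, ← integral_re (int_conj_mul g1 g1)]
    refine integral_congr_ae (Eventually.of_forall fun x => ?_)
    simp only [RCLike.re_to_complex]
    rw [mul_comm, Complex.mul_conj]
    norm_cast
    simp [Complex.normSq_eq_norm_sq]
  have hb : (∫ x : ℝ, ‖g1 x‖ ^ 2) ≤ ∫ x : ℝ, ‖g x‖ * ‖g2 x‖ := by
    rw [hre]
    rw [show (∫ x : ℝ, (starRingEnd ℂ) (g1 x) * g1 x)
        = -(∫ x : ℝ, (starRingEnd ℂ) (g x) * g2 x) by rw [hparts, neg_neg], Complex.neg_re]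
    calc -(∫ x : ℝ, (starRingEnd ℂ) (g x) * g2 x).re
        ≤ |(∫ x : ℝ, (starRingEnd ℂ) (g x) * g2 x).re| := neg_le_abs _
      _ ≤ ‖∫ x : ℝ, (starRingEnd ℂ) (g x) * g2 x‖ := Complex.abs_re_le_norm _
      _ ≤ ∫ x : ℝ, ‖(starRingEnd ℂ) (g x) * g2 x‖ := norm_integral_le_integral_norm _
      _ = ∫ x : ℝ, ‖g x‖ * ‖g2 x‖ := by simp [norm_mul]
  refine hb.trans (cauchy_schwarz _ _ (fun x => norm_nonneg _) (fun x => norm_nonneg _)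
    g.continuous.norm.aestronglyMeasurable g2.continuous.norm.aestronglyMeasurable ?_ ?_)
  · have := int_sq_pow g 0
    simpa using this
  · have := int_sq_pow g2 0
    simpa using this

/-- Step A: moment interpolation. -/
lemma stepA (φ : SchwartzMap ℝ ℂ) (k : ℕ) :
    (∫ x : ℝ, (|x| ^ (k+1) * ‖φ x‖) ^ 2) ≤
      Real.sqrt (∫ x : ℝ, (|x| ^ k * ‖φ x‖) ^ 2) *
        Real.sqrt (∫ x : ℝ, (|x| ^ (k+2) * ‖φ x‖) ^ 2) := by
  have hpt : ∀ x : ℝ, (|x| ^ (k+1) * ‖φ x‖) ^ 2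
      = (|x| ^ k * ‖φ x‖) * (|x| ^ (k+2) * ‖φ x‖) := by
    intro x; ring
  rw [show (fun x : ℝ => (|x| ^ (k+1) * ‖φ x‖) ^ 2)
      = fun x : ℝ => (|x| ^ k * ‖φ x‖) * (|x| ^ (k+2) * ‖φ x‖) from funext hpt]
  exact cauchy_schwarz _ _ (fun x => by positivity) (fun x => by positivity)
    (((_root_.continuous_abs.pow k).mul φ.continuous.norm).aestronglyMeasurable)
    (((_root_.continuous_abs.pow (k+2)).mul φ.continuous.norm).aestronglyMeasurable)
    (int_sq_pow φ k) (int_sq_pow φ (k+2))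

/-- Step C: base uncertainty principle. -/
lemma stepC (φ : SchwartzMap ℝ ℂ) :
    (∫ x : ℝ, ‖φ x‖ ^ 2) ≤
      2 * (Real.sqrt (∫ x : ℝ, (|x| ^ 1 * ‖φ x‖) ^ 2) *
        Real.sqrt (∫ x : ℝ, ‖SchwartzMap.derivCLM ℝ ℂ φ x‖ ^ 2)) := by
  set φ1 := SchwartzMap.derivCLM ℝ ℂ φ with hφ1
  set v : ℝ → ℝ := fun x => ((starRingEnd ℂ) (φ x) * φ x).re with hv
  set v' : ℝ → ℝ := fun x =>
    ((starRingEnd ℂ) (φ1 x) * φ x + (starRingEnd ℂ) (φ x) * φ1 x).re with hv'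
  have hveq : ∀ x, v x = ‖φ x‖ ^ 2 := by
    intro x
    rw [hv]
    simp only [mul_comm ((starRingEnd ℂ) (φ x)) (φ x), Complex.mul_conj]
    norm_cast
    simp [Complex.normSq_eq_norm_sq]
  have hvd : ∀ x, HasDerivAt v (v' x) x := by
    intro x
    have h := ((schwartz_hasDerivAt φ x).star.mul (schwartz_hasDerivAt φ x))
    exact (Complex.reCLM.hasFDerivAt.comp_hasDerivAt x h)
  have hud : ∀ x : ℝ, HasDerivAt (fun y : ℝ => y) (1 : ℝ) x := fun x => hasDerivAt_id x
  have hv'bound : ∀ x, |v' x| ≤ 2 * (‖φ x‖ * ‖φ1 x‖) := by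
    intro x
    rw [hv']
    calc |((starRingEnd ℂ) (φ1 x) * φ x + (starRingEnd ℂ) (φ x) * φ1 x).re|
        ≤ ‖(starRingEnd ℂ) (φ1 x) * φ x + (starRingEnd ℂ) (φ x) * φ1 x‖ :=
          Complex.abs_re_le_norm _
      _ ≤ ‖(starRingEnd ℂ) (φ1 x) * φ x‖ + ‖(starRingEnd ℂ) (φ x) * φ1 x‖ := norm_add_le _ _
      _ = 2 * (‖φ x‖ * ‖φ1 x‖) := by simp [norm_mul]; ring
  have hv'cont : Continuous v' := by
    apply Complex.continuous_re.comp
    exact (((continuous_conj).comp φ1.continuous).mul φ.continuous).add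
      (((continuous_conj).comp φ.continuous).mul φ1.continuous)
  have hvcont : Continuous v := by
    apply Complex.continuous_re.comp
    exact ((continuous_conj).comp φ.continuous).mul φ.continuous
  -- integrability
  have hi1 : Integrable (fun x : ℝ => x * v' x) volume := by
    refine ((int_pow_mul φ φ1 1).const_mul 2).mono'
      (continuous_id.mul hv'cont).aestronglyMeasurable (Eventually.of_forall fun x => ?_)
    rw [Real.norm_eq_abs, abs_mul]
    calc |x| * |v' x| ≤ |x| * (2 * (‖φ x‖ * ‖φ1 x‖)) :=
          mul_le_mul_of_nonneg_left (hv'bound x) (abs_nonneg x)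
      _ = 2 * (|x| ^ 1 * (‖φ x‖ * ‖φ1 x‖)) := by ring
  have hi2 : Integrable (fun x : ℝ => (1:ℝ) * v x) volume := by
    refine (int_mul_schwartz φ φ).mono' (continuous_const.mul hvcont).aestronglyMeasurable
      (Eventually.of_forall fun x => ?_)
    rw [one_mul, hveq x, Real.norm_of_nonneg (by positivity)]
    rw [pow_two]
  have hi3 : Integrable (fun x : ℝ => x * v x) volume := by
    refine (int_pow_mul φ φ 1).mono' (continuous_id.mul hvcont).aestronglyMeasurable
      (Eventually.of_forall fun x => ?_)
    rw [Real.norm_eq_abs, abs_mul, hveq x]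
    rw [abs_of_nonneg (a := ‖φ x‖ ^ 2) (by positivity)]
    exact le_of_eq (by ring)
  have hparts : (∫ x : ℝ, x * v' x) = - ∫ x : ℝ, (1:ℝ) * v x := by
    have := integral_mul_deriv_eq_deriv_mul_of_integrable (fun x _ => hud x) (fun x _ => hvd x) hi1 hi2 hi3
    simpa using this
  have h1 : (∫ x : ℝ, ‖φ x‖ ^ 2) = - ∫ x : ℝ, x * v' x := by
    rw [hparts, neg_neg]
    refine integral_congr_ae (Eventually.of_forall fun x => ?_)
    show ‖φ x‖ ^ 2 = 1 * v x
    rw [one_mul, hveq x]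
  have h2 : (∫ x : ℝ, ‖φ x‖ ^ 2) ≤ ∫ x : ℝ, 2 * ((|x| ^ 1 * ‖φ x‖) * ‖φ1 x‖) := by
    rw [h1]
    calc -∫ x : ℝ, x * v' x ≤ |∫ x : ℝ, x * v' x| := neg_le_abs _
      _ ≤ ∫ x : ℝ, |x| * |v' x| := by
          simpa [Real.norm_eq_abs, abs_mul] using
            norm_integral_le_integral_norm (μ := volume) (fun x : ℝ => x * v' x)
      _ ≤ ∫ x : ℝ, 2 * ((|x| ^ 1 * ‖φ x‖) * ‖φ1 x‖) := by
          refine integral_mono_of_nonneg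
            (Eventually.of_forall fun x => mul_nonneg (abs_nonneg _) (abs_nonneg _))
            (((int_pow_mul φ φ1 1).const_mul 2).congr (Eventually.of_forall fun x => by ring))
            (Eventually.of_forall fun x => ?_)
          show |x| * |v' x| ≤ 2 * ((|x| ^ 1 * ‖φ x‖) * ‖φ1 x‖)
          calc |x| * |v' x| ≤ |x| * (2 * (‖φ x‖ * ‖φ1 x‖)) :=
                mul_le_mul_of_nonneg_left (hv'bound x) (abs_nonneg x)
            _ = 2 * ((|x| ^ 1 * ‖φ x‖) * ‖φ1 x‖) := by ring
  rw [integral_const_mul] at h2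
  refine h2.trans ?_
  have := cauchy_schwarz (fun x => |x| ^ 1 * ‖φ x‖) (fun x => ‖φ1 x‖)
    (fun x => by positivity) (fun x => norm_nonneg _)
    (((_root_.continuous_abs.pow 1).mul φ.continuous.norm).aestronglyMeasurable)
    φ1.continuous.norm.aestronglyMeasurable (int_sq_pow φ 1) (by simpa using int_sq_pow φ1 0)
  have h3 : (∫ x : ℝ, (|x| ^ 1 * ‖φ x‖) * ‖φ1 x‖)
      ≤ Real.sqrt (∫ x : ℝ, (|x| ^ 1 * ‖φ x‖) ^ 2) * Real.sqrt (∫ x : ℝ, ‖φ1 x‖ ^ 2) := this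
  nlinarith [h3]

/-- log-convexity chain. -/
lemma chain (c : ℕ → ℝ) (hc : ∀ k, 0 ≤ c k) (h : ∀ k, c (k+1) ^ 2 ≤ c k * c (k+2)) :
    ∀ m, 1 ≤ m → c 1 ^ m ≤ c m * c 0 ^ (m - 1) := by
  have key : ∀ m, 1 ≤ m → c 1 ^ m ≤ c m * c 0 ^ (m - 1) ∧ c 1 * c m ≤ c 0 * c (m+1) := by
    intro m hm
    induction m, hm using Nat.le_induction with
    | base => exact ⟨by simp, by simpa [sq] using h 0⟩
    | succ n hn ih =>
      obtain ⟨ih1, ih2⟩ := ih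
      constructor
      · have e2 : c 0 ^ (n + 1 - 1) = c 0 ^ (n-1) * c 0 := by
          rw [← pow_succ]
          congr 1
          omega
        rw [pow_succ, e2]
        calc c 1 ^ n * c 1 ≤ (c n * c 0 ^ (n-1)) * c 1 :=
              mul_le_mul_of_nonneg_right ih1 (hc 1)
          _ = (c 1 * c n) * c 0 ^ (n-1) := by ring
          _ ≤ (c 0 * c (n+1)) * c 0 ^ (n-1) :=
              mul_le_mul_of_nonneg_right ih2 (pow_nonneg (hc 0) (n-1))
          _ = c (n+1) * (c 0 ^ (n-1) * c 0) := by ring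
      · rcases (hc (n+1)).eq_or_lt with hz | hpos
        · rw [← hz, mul_zero]
          exact mul_nonneg (hc 0) (hc (n+2))
        · have h2' : (c 1 * c (n+1)) * c (n+1) ≤ (c 0 * c (n+2)) * c (n+1) := by
            calc (c 1 * c (n+1)) * c (n+1) = c 1 * c (n+1) ^ 2 := by ring
              _ ≤ c 1 * (c n * c (n+2)) := mul_le_mul_of_nonneg_left (h n) (hc 1)
              _ = (c 1 * c n) * c (n+2) := by ring
              _ ≤ (c 0 * c (n+1)) * c (n+2) := mul_le_mul_of_nonneg_right ih2 (hc (n+2))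
              _ = (c 0 * c (n+2)) * c (n+1) := by ring
          exact le_of_mul_le_mul_right h2' hpos
  exact fun m hm => (key m hm).1

/-- iterated derivative as a Schwartz map -/
noncomputable def SD (φ : SchwartzMap ℝ ℂ) : ℕ → SchwartzMap ℝ ℂ
  | 0 => φ
  | (k+1) => SchwartzMap.derivCLM ℝ ℂ (SD φ k)

lemma SD_coe (φ : SchwartzMap ℝ ℂ) (k : ℕ) : ⇑(SD φ k) = iteratedDeriv k ⇑φ := by
  induction k with
  | zero => simp [SD]
  | succ n ih =>
      ext x
      rw [iteratedDeriv_succ, ← ih]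
      exact SchwartzMap.derivCLM_apply ℝ (SD φ n) x


/-- abstract final combination -/
lemma final_combine (A B : ℕ → ℝ) (hA0 : ∀ k, 0 ≤ A k) (hB0 : ∀ k, 0 ≤ B k)
    (hach : ∀ k, A (k+1) ≤ Real.sqrt (A k) * Real.sqrt (A (k+2)))
    (hbch : ∀ k, B (k+1) ≤ Real.sqrt (B k) * Real.sqrt (B (k+2)))
    (hbase : A 0 ≤ 2 * (Real.sqrt (A 1) * Real.sqrt (B 1)))
    (hAB : B 0 = A 0) (m : ℕ) (hm : 1 ≤ m) :
    A 0 ≤ 2 ^ m * Real.sqrt (A m) * Real.sqrt (B m) := by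
  set a : ℕ → ℝ := fun k => Real.sqrt (A k) with ha
  set b : ℕ → ℝ := fun k => Real.sqrt (B k) with hb
  have ha0 : ∀ k, 0 ≤ a k := fun k => Real.sqrt_nonneg _
  have hb0 : ∀ k, 0 ≤ b k := fun k => Real.sqrt_nonneg _
  have haSq : ∀ k, a k ^ 2 = A k := fun k => Real.sq_sqrt (hA0 k)
  have hbSq : ∀ k, b k ^ 2 = B k := fun k => Real.sq_sqrt (hB0 k)
  have hachain : ∀ k, a (k+1) ^ 2 ≤ a k * a (k+2) := fun k => by
    rw [haSq]; exact hach k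
  have hbchain : ∀ k, b (k+1) ^ 2 ≤ b k * b (k+2) := fun k => by
    rw [hbSq]; exact hbch k
  have hachain' := chain a ha0 hachain m hm
  have hbchain' := chain b hb0 hbchain m hm
  have hb0a0 : b 0 = a 0 := by rw [ha, hb]; simp only [hAB]
  rcases (ha0 0).eq_or_lt with hz | hpos
  · rw [← haSq 0, ← hz]
    have h0 : (0:ℝ) ^ 2 = 0 := by norm_num
    rw [h0]
    positivity
  · have key : a 0 ^ (2 * m) ≤ (2 ^ m * a m * b m) * a 0 ^ (2 * (m - 1)) := by
      calc a 0 ^ (2 * m) = (a 0 ^ 2) ^ m := by rw [pow_mul]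
        _ ≤ (2 * (a 1 * b 1)) ^ m := by
            refine pow_le_pow_left₀ (sq_nonneg _) ?_ m
            rw [haSq]; exact hbase
        _ = 2 ^ m * (a 1 ^ m * b 1 ^ m) := by rw [mul_pow, mul_pow]
        _ ≤ 2 ^ m * ((a m * a 0 ^ (m-1)) * (b m * b 0 ^ (m-1))) := by
            refine mul_le_mul_of_nonneg_left ?_ (by positivity)
            exact mul_le_mul hachain' hbchain' (pow_nonneg (hb0 1) m)
              (mul_nonneg (ha0 m) (pow_nonneg (ha0 0) _))
        _ = (2 ^ m * a m * b m) * a 0 ^ (2 * (m - 1)) := by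
            rw [hb0a0, two_mul, pow_add]
            ring
    have hexp : 2 * m = 2 + 2 * (m - 1) := by omega
    rw [hexp, pow_add] at key
    have hfin := le_of_mul_le_mul_right key (pow_pos hpos (2 * (m-1)))
    rw [← haSq 0]
    exact hfin

end GenUncertainty

open GenUncertainty

/-- Generalized uncertainty principle on `ℝ`: for Schwartz `φ` and `m ≥ 1`,
`‖φ‖² ≤ 2^m ‖x^m φ‖ · ‖φ^{(m)}‖` (L² norms). -/
theorem generalized_uncertainty (m : ℕ) (hm : 1 ≤ m) (φ : SchwartzMap ℝ ℂ) :
    (∫ x : ℝ, ‖φ x‖ ^ 2) ≤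
      2 ^ m * Real.sqrt (∫ x : ℝ, ‖(x : ℂ) ^ m * φ x‖ ^ 2) *
        Real.sqrt (∫ x : ℝ, ‖iteratedDeriv m (⇑φ) x‖ ^ 2) := by
  have main := final_combine (fun k => ∫ x : ℝ, (|x| ^ k * ‖φ x‖) ^ 2)
    (fun k => ∫ x : ℝ, ‖SD φ k x‖ ^ 2)
    (fun k => integral_nonneg fun x => by positivity)
    (fun k => integral_nonneg fun x => by positivity)
    (fun k => stepA φ k)
    (fun k => stepB (SD φ k))
    ?_ ?_ m hm
  · have egoal1 : (∫ x : ℝ, ‖φ x‖ ^ 2) = ∫ x : ℝ, (|x| ^ 0 * ‖φ x‖) ^ 2 :=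
      integral_congr_ae (Eventually.of_forall fun x => by simp)
    have egoal2 : (∫ x : ℝ, ‖(x : ℂ) ^ m * φ x‖ ^ 2) = ∫ x : ℝ, (|x| ^ m * ‖φ x‖) ^ 2 := by
      refine integral_congr_ae (Eventually.of_forall fun x => ?_)
      simp [norm_mul, norm_pow, Complex.norm_real, Real.norm_eq_abs, mul_pow]
    have egoal3 : (∫ x : ℝ, ‖iteratedDeriv m (⇑φ) x‖ ^ 2) = ∫ x : ℝ, ‖SD φ m x‖ ^ 2 := by
      rw [SD_coe]
    rw [egoal1, egoal2, egoal3]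
    exact main
  · -- base
    show (∫ x : ℝ, (|x| ^ 0 * ‖φ x‖) ^ 2) ≤
      2 * (Real.sqrt (∫ x : ℝ, (|x| ^ 1 * ‖φ x‖) ^ 2) * Real.sqrt (∫ x : ℝ, ‖SD φ 1 x‖ ^ 2))
    have e0 : (∫ x : ℝ, (|x| ^ 0 * ‖φ x‖) ^ 2) = ∫ x : ℝ, ‖φ x‖ ^ 2 :=
      integral_congr_ae (Eventually.of_forall fun x => by simp)
    rw [e0]
    have := stepC φ
    simpa [SD] using this
  · -- B 0 = A 0
    show (∫ x : ℝ, ‖SD φ 0 x‖ ^ 2) = ∫ x : ℝ, (|x| ^ 0 * ‖φ x‖) ^ 2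
    refine integral_congr_ae (Eventually.of_forall fun x => ?_)
    simp [SD]
end

section
/- Let G be a countable graph with maximal degree ≤ D, A its adjacency operator, V a bounded real potential, H = A + V on ℓ²(G), and fix an origin o with |x| = d(x, o). If ψ ∈ ℓ²(G) satisfies ‖ |x| ψ ‖ < ∞ (i.e. ∑_x |x|²|ψ(x)|² < ∞), then for all t ≥ 0, ∑_x |x|² |e^{-itH}ψ(x)|² ≤ (‖|x|ψ‖ + tD‖ψ‖)². -/
open Finset
open scoped ENNReal NNReal

section BallisticAux

variable {ι : Type*}

private lemma rpow_toReal_two (x : ℝ) : x ^ (2 : ℝ≥0∞).toReal = x ^ 2 := by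
  rw [show (2 : ℝ≥0∞).toReal = (2 : ℝ) by norm_num, Real.rpow_two]

private lemma lp_norm_sq (g : lp (fun _ : ι => ℂ) 2) :
    ‖g‖ ^ 2 = ∑' v, ‖(g : ∀ _ : ι, ℂ) v‖ ^ 2 := by
  have h := lp.norm_rpow_eq_tsum (p := 2) (E := fun _ : ι => ℂ) (by norm_num) g
  simpa only [rpow_toReal_two] using h

private lemma lp_summable_sq (g : lp (fun _ : ι => ℂ) 2) :
    Summable fun v => ‖(g : ∀ _ : ι, ℂ) v‖ ^ 2 := by
  have h := (lp.memℓp g).summable (p := 2) (by norm_num)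
  simpa only [rpow_toReal_two] using h

private lemma memℓp_two_mul_of_bounded (f : ι → ℝ) (K : ℝ) (hf : ∀ v, |f v| ≤ K)
    (g : lp (fun _ : ι => ℂ) 2) :
    Memℓp (fun v => (f v : ℂ) * (g : ∀ _ : ι, ℂ) v) 2 := by
  apply memℓp_gen
  simp only [rpow_toReal_two]
  refine Summable.of_nonneg_of_le (fun v => by positivity) (fun v => ?_)
    ((lp_summable_sq g).mul_left (K ^ 2))
  have h1 : ‖(f v : ℂ) * (g : ∀ _ : ι, ℂ) v‖ ≤ K * ‖(g : ∀ _ : ι, ℂ) v‖ := by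
    rw [norm_mul, Complex.norm_real]
    exact mul_le_mul_of_nonneg_right (hf v) (norm_nonneg _)
  calc ‖(f v : ℂ) * (g : ∀ _ : ι, ℂ) v‖ ^ 2 ≤ (K * ‖(g : ∀ _ : ι, ℂ) v‖) ^ 2 :=
        pow_le_pow_left₀ (norm_nonneg _) h1 2
    _ = K ^ 2 * ‖(g : ∀ _ : ι, ℂ) v‖ ^ 2 := by ring

/-- Multiplication by a bounded real function as a continuous linear map on `ℓ²`. -/
noncomputable def mulCLM (f : ι → ℝ) (K : ℝ) (hK : 0 ≤ K) (hf : ∀ v, |f v| ≤ K) :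
    lp (fun _ : ι => ℂ) 2 →L[ℂ] lp (fun _ : ι => ℂ) 2 :=
  LinearMap.mkContinuous
    { toFun := fun g => ⟨fun v => (f v : ℂ) * (g : ∀ _ : ι, ℂ) v,
        memℓp_two_mul_of_bounded f K hf g⟩
      map_add' := fun g h => by
        apply lp.ext
        funext v
        simp only [lp.coeFn_add, Pi.add_apply]
        change (f v : ℂ) * ((g : ∀ _ : ι, ℂ) v + (h : ∀ _ : ι, ℂ) v) = _
        ring
      map_smul' := fun c g => by
        apply lp.ext
        funext v
        simp only [lp.coeFn_smul, Pi.smul_apply, RingHom.id_apply, smul_eq_mul]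
        change (f v : ℂ) * (c * (g : ∀ _ : ι, ℂ) v) = c * ((f v : ℂ) * (g : ∀ _ : ι, ℂ) v)
        ring }
    K
    (by
      intro g
      refine lp.norm_le_of_forall_sum_le (by norm_num) (mul_nonneg hK (norm_nonneg _))
        fun s => ?_
      simp only [rpow_toReal_two]
      have hterm : ∀ v, ‖(f v : ℂ) * (g : ∀ _ : ι, ℂ) v‖ ^ 2 ≤ K ^ 2 * ‖(g : ∀ _ : ι, ℂ) v‖ ^ 2 := by
        intro v
        have h1 : ‖(f v : ℂ) * (g : ∀ _ : ι, ℂ) v‖ ≤ K * ‖(g : ∀ _ : ι, ℂ) v‖ := by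
          rw [norm_mul, Complex.norm_real]
          exact mul_le_mul_of_nonneg_right (hf v) (norm_nonneg _)
        calc ‖(f v : ℂ) * (g : ∀ _ : ι, ℂ) v‖ ^ 2 ≤ (K * ‖(g : ∀ _ : ι, ℂ) v‖) ^ 2 :=
              pow_le_pow_left₀ (norm_nonneg _) h1 2
          _ = K ^ 2 * ‖(g : ∀ _ : ι, ℂ) v‖ ^ 2 := by ring
      have hsum : ∀ v ∈ s, ‖(f v : ℂ) * (g : ∀ _ : ι, ℂ) v‖ ^ 2
          ≤ K ^ 2 * ‖(g : ∀ _ : ι, ℂ) v‖ ^ 2 := fun v _ => hterm v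
      calc (∑ v ∈ s, ‖(f v : ℂ) * (g : ∀ _ : ι, ℂ) v‖ ^ 2)
          ≤ ∑ v ∈ s, K ^ 2 * ‖(g : ∀ _ : ι, ℂ) v‖ ^ 2 := Finset.sum_le_sum hsum
        _ = K ^ 2 * ∑ v ∈ s, ‖(g : ∀ _ : ι, ℂ) v‖ ^ 2 := by rw [Finset.mul_sum]
        _ ≤ K ^ 2 * ‖g‖ ^ 2 := by
            refine mul_le_mul_of_nonneg_left ?_ (by positivity)
            rw [lp_norm_sq]
            exact Summable.sum_le_tsum s (fun v _ => by positivity) (lp_summable_sq g)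
        _ = (K * ‖g‖) ^ 2 := by ring)

@[simp] lemma mulCLM_apply (f : ι → ℝ) (K : ℝ) (hK : 0 ≤ K) (hf : ∀ v, |f v| ≤ K)
    (g : lp (fun _ : ι => ℂ) 2) (v : ι) :
    (mulCLM f K hK hf g : ∀ _ : ι, ℂ) v = (f v : ℂ) * (g : ∀ _ : ι, ℂ) v := rfl

/-- Schur-type bound for a neighbor-sum operator with entries of modulus `≤ 1`. -/
private lemma schur_bound {V : Type*} (G : SimpleGraph V) [∀ v, Fintype (G.neighborSet v)]
    (D : ℕ) (hD : ∀ v, G.degree v ≤ D)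
    (c : V → V → ℝ) (hc : ∀ v u, G.Adj v u → |c v u| ≤ 1)
    (ψ ξ : lp (fun _ : V => ℂ) 2)
    (hξ : ∀ v, (ξ : ∀ _ : V, ℂ) v
      = ∑ u ∈ G.neighborFinset v, (c v u : ℂ) * (ψ : ∀ _ : V, ℂ) u) :
    ‖ξ‖ ≤ D * ‖ψ‖ := by
  classical
  set g : V → ℝ := fun u => ‖(ψ : ∀ _ : V, ℂ) u‖ ^ 2 with hgdef
  have hg0 : ∀ u, 0 ≤ g u := fun u => by positivity
  have hgsum : ∀ s : Finset V, ∑ u ∈ s, g u ≤ ‖ψ‖ ^ 2 := by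
    intro s
    rw [lp_norm_sq]
    exact Summable.sum_le_tsum s (fun u _ => hg0 u) (lp_summable_sq ψ)
  have hpt : ∀ v, ‖(ξ : ∀ _ : V, ℂ) v‖ ^ 2 ≤ D * ∑ u ∈ G.neighborFinset v, g u := by
    intro v
    have h1 : ‖(ξ : ∀ _ : V, ℂ) v‖ ≤ ∑ u ∈ G.neighborFinset v, ‖(ψ : ∀ _ : V, ℂ) u‖ := by
      rw [hξ]
      refine (norm_sum_le _ _).trans (Finset.sum_le_sum fun u hu => ?_)
      rw [norm_mul, Complex.norm_real]
      have hadj : G.Adj v u := (SimpleGraph.mem_neighborFinset _ _ _).mp hu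
      calc |c v u| * ‖(ψ : ∀ _ : V, ℂ) u‖ ≤ 1 * ‖(ψ : ∀ _ : V, ℂ) u‖ :=
            mul_le_mul_of_nonneg_right (hc v u hadj) (norm_nonneg _)
        _ = ‖(ψ : ∀ _ : V, ℂ) u‖ := one_mul _
    calc ‖(ξ : ∀ _ : V, ℂ) v‖ ^ 2
        ≤ (∑ u ∈ G.neighborFinset v, ‖(ψ : ∀ _ : V, ℂ) u‖) ^ 2 :=
          pow_le_pow_left₀ (norm_nonneg _) h1 2
      _ ≤ (G.neighborFinset v).card * ∑ u ∈ G.neighborFinset v, ‖(ψ : ∀ _ : V, ℂ) u‖ ^ 2 :=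
          sq_sum_le_card_mul_sum_sq
      _ ≤ D * ∑ u ∈ G.neighborFinset v, g u := by
          refine mul_le_mul_of_nonneg_right ?_ (Finset.sum_nonneg fun u _ => hg0 u)
          exact_mod_cast hD v
  have hsum : ∀ s : Finset V, ∑ v ∈ s, ∑ u ∈ G.neighborFinset v, g u ≤ D * ‖ψ‖ ^ 2 := by
    intro s
    set T := s.biUnion (fun v => G.neighborFinset v) with hT
    have h1 : ∑ v ∈ s, ∑ u ∈ G.neighborFinset v, g u
        = ∑ v ∈ s, ∑ u ∈ T, if u ∈ G.neighborFinset v then g u else 0 := by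
      refine Finset.sum_congr rfl fun v hv => ?_
      rw [Finset.sum_ite_mem, Finset.inter_eq_right.mpr (Finset.subset_biUnion_of_mem _ hv)]
    rw [h1, Finset.sum_comm]
    have h2 : ∀ u ∈ T, (∑ v ∈ s, if u ∈ G.neighborFinset v then g u else 0) ≤ D * g u := by
      intro u _
      have heq : (∑ v ∈ s, if u ∈ G.neighborFinset v then g u else 0)
          = ((s.filter (fun v => u ∈ G.neighborFinset v)).card : ℝ) * g u := by
        rw [← Finset.sum_filter, Finset.sum_const, nsmul_eq_mul]
      rw [heq]
      have hcard : (s.filter (fun v => u ∈ G.neighborFinset v)).card ≤ D := by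
        refine le_trans (Finset.card_le_card ?_) (hD u)
        intro v hv
        simp only [Finset.mem_filter, SimpleGraph.mem_neighborFinset] at hv ⊢
        exact hv.2.symm
      exact mul_le_mul_of_nonneg_right (by exact_mod_cast hcard) (hg0 u)
    calc (∑ u ∈ T, ∑ v ∈ s, if u ∈ G.neighborFinset v then g u else 0)
        ≤ ∑ u ∈ T, D * g u := Finset.sum_le_sum h2
      _ = D * ∑ u ∈ T, g u := by rw [Finset.mul_sum]
      _ ≤ D * ‖ψ‖ ^ 2 := mul_le_mul_of_nonneg_left (hgsum T) (by positivity)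
  refine lp.norm_le_of_forall_sum_le (by norm_num)
    (mul_nonneg (Nat.cast_nonneg D) (norm_nonneg _)) fun s => ?_
  simp only [rpow_toReal_two]
  calc (∑ v ∈ s, ‖(ξ : ∀ _ : V, ℂ) v‖ ^ 2)
      ≤ ∑ v ∈ s, (D : ℝ) * ∑ u ∈ G.neighborFinset v, g u :=
        Finset.sum_le_sum fun v _ => hpt v
    _ = D * ∑ v ∈ s, ∑ u ∈ G.neighborFinset v, g u := by rw [Finset.mul_sum]
    _ ≤ D * (D * ‖ψ‖ ^ 2) := mul_le_mul_of_nonneg_left (hsum s) (Nat.cast_nonneg D)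
    _ = ((D : ℝ) * ‖ψ‖) ^ 2 := by ring

end BallisticAux

set_option maxHeartbeats 2000000 in
/-- First-moment ballistic upper bound for `H = A + V` on a countable graph of maximal
degree `≤ D`: if `∑_x |x|²|ψ(x)|² < ∞`, then for `t ≥ 0`,
`∑_x |x|² |e^{-itH}ψ(x)|² ≤ (‖|x|ψ‖ + tD‖ψ‖)²`. -/
theorem ballistic_upper_bound_first_moment
    {V : Type*} [Countable V] (G : SimpleGraph V)
    [∀ v, Fintype (G.neighborSet v)] (D : ℕ) (hD : ∀ v, G.degree v ≤ D)
    (o : V) (W : V → ℝ) (C : ℝ) (hW : ∀ v, |W v| ≤ C)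
    (H : lp (fun _ : V => ℂ) 2 →L[ℂ] lp (fun _ : V => ℂ) 2)
    (hH : ∀ (ψ : lp (fun _ : V => ℂ) 2) (v : V),
      (H ψ : ∀ _ : V, ℂ) v = (∑ u ∈ G.neighborFinset v, (ψ : ∀ _ : V, ℂ) u)
        + (W v : ℂ) * (ψ : ∀ _ : V, ℂ) v)
    (hsa : IsSelfAdjoint H)
    (ψ : lp (fun _ : V => ℂ) 2)
    (hmom : Summable fun v => (G.dist o v : ℝ) ^ 2 * ‖(ψ : ∀ _ : V, ℂ) v‖ ^ 2)
    (t : ℝ) (ht : 0 ≤ t) :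
    ∑' v : V, (G.dist o v : ℝ) ^ 2 *
        ‖(NormedSpace.exp ((-(t : ℂ) * Complex.I) • H) ψ : ∀ _ : V, ℂ) v‖ ^ 2
      ≤ (Real.sqrt (∑' v : V, (G.dist o v : ℝ) ^ 2 * ‖(ψ : ∀ _ : V, ℂ) v‖ ^ 2)
          + t * (D : ℝ) * ‖ψ‖) ^ 2 := by
  classical
  set A : (lp (fun _ : V => ℂ) 2) →L[ℂ] (lp (fun _ : V => ℂ) 2) := (-Complex.I) • H with hA
  -- skew-adjointness
  have hstarA : star A = -A := by
    rw [hA, star_smul, hsa.star_eq]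
    simp [Complex.conj_I]
  have hskew : ∀ (B : (lp (fun _ : V => ℂ) 2) →L[ℂ] (lp (fun _ : V => ℂ) 2)), star B = -B → ∀ s : ℝ,
      s • B ∈ skewAdjoint ((lp (fun _ : V => ℂ) 2) →L[ℂ] (lp (fun _ : V => ℂ) 2)) := by
    intro B hB s
    rw [skewAdjoint.mem_iff]
    have h1 : s • B = (s : ℂ) • B := by
      rw [← algebraMap_smul ℂ s B]; rfl
    rw [h1, star_smul, hB]
    simp [Complex.conj_ofReal]
  have hstarNegA : star (-A) = -(-A) := by rw [star_neg, hstarA, neg_neg]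
  have hunit : ∀ (B : (lp (fun _ : V => ℂ) 2) →L[ℂ] (lp (fun _ : V => ℂ) 2)), star B = -B → ∀ s : ℝ,
      ∀ x : (lp (fun _ : V => ℂ) 2), ‖NormedSpace.exp (s • B) x‖ = ‖x‖ := by
    intro B hB s x
    letI : NormedAlgebra ℚ ((lp (fun _ : V => ℂ) 2) →L[ℂ] (lp (fun _ : V => ℂ) 2)) :=
      NormedAlgebra.restrictScalars ℚ ℝ _
    exact ContinuousLinearMap.norm_map_of_mem_unitary
      (NormedSpace.exp_mem_unitary_of_mem_skewAdjoint (hskew B hB s)) x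
  -- the evolution in the statement is exp ℝ (t • A)
  have hexp_eq : NormedSpace.exp ((-(t : ℂ) * Complex.I) • H) = NormedSpace.exp (t • A) := by
    congr 1
    rw [hA, ← smul_assoc]
    congr 1
    rw [Complex.real_smul]
    push_cast
    ring
  rw [hexp_eq]
  set u : (lp (fun _ : V => ℂ) 2) := NormedSpace.exp (t • A) ψ with hu
  set S := ∑' v : V, (G.dist o v : ℝ) ^ 2 * ‖(ψ : ∀ _ : V, ℂ) v‖ ^ 2 with hS
  -- distances of adjacent vertices differ by at most one
  have hkey : ∀ x y : V, G.Adj x y → G.dist o x ≤ G.dist o y + 1 := by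
    intro x y h
    by_cases hr : G.Reachable o y
    · obtain ⟨p, hp⟩ := hr.exists_walk_length_eq_dist
      have h2 := SimpleGraph.dist_le (p.concat h.symm)
      rwa [SimpleGraph.Walk.length_concat, hp] at h2
    · have hnr : ¬ G.Reachable o x := fun h' => hr (h'.trans h.reachable)
      simp [SimpleGraph.dist_eq_zero_of_not_reachable hnr]
  have hdist1 : ∀ x y : V, G.Adj x y → |(G.dist o x : ℝ) - (G.dist o y : ℝ)| ≤ 1 := by
    intro x y h
    have h1 : (G.dist o x : ℝ) ≤ (G.dist o y : ℝ) + 1 := by exact_mod_cast hkey x y h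
    have h2 : (G.dist o y : ℝ) ≤ (G.dist o x : ℝ) + 1 := by exact_mod_cast hkey y x h.symm
    rw [abs_sub_le_iff]
    constructor <;> linarith
  -- the key truncated bound
  have key : ∀ n : ℕ, ∑' v : V, min (G.dist o v : ℝ) n ^ 2 * ‖(u : ∀ _ : V, ℂ) v‖ ^ 2
      ≤ (Real.sqrt S + t * D * ‖ψ‖) ^ 2 := by
    intro n
    set f : V → ℝ := fun v => min (G.dist o v : ℝ) n with hf
    have hfnn : ∀ v, 0 ≤ f v := fun v => le_min (by positivity) (by positivity)
    have hfb : ∀ v, |f v| ≤ (n : ℝ) := by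
      intro v
      rw [abs_of_nonneg (hfnn v)]
      exact min_le_right _ _
    set M := mulCLM f n (Nat.cast_nonneg n) hfb with hM
    have hMapp : ∀ (g : (lp (fun _ : V => ℂ) 2)) (v : V), (M g : ∀ _ : V, ℂ) v = (f v : ℂ) * (g : ∀ _ : V, ℂ) v :=
      fun g v => rfl
    have hlip : ∀ v w : V, G.Adj v w → |f v - f w| ≤ 1 := by
      intro v w h
      refine le_trans (abs_min_sub_min_le_max _ _ _ _) ?_
      rw [sub_self, abs_zero, max_eq_left (abs_nonneg _)]
      exact hdist1 v w h
    -- commutator bound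
    have hcomm : ∀ φ : (lp (fun _ : V => ℂ) 2), ‖M (H φ) - H (M φ)‖ ≤ D * ‖φ‖ := by
      intro φ
      refine schur_bound G D hD (fun v w => f v - f w) (fun v w h => hlip v w h) φ _ ?_
      intro v
      rw [lp.coeFn_sub, Pi.sub_apply, hMapp, hH φ v, hH (M φ) v]
      simp only [hMapp]
      push_cast
      rw [mul_add, Finset.mul_sum]
      rw [show (∑ x ∈ G.neighborFinset v, ((f v : ℂ) - (f x : ℂ)) * (φ : ∀ _ : V, ℂ) x)
          = (∑ x ∈ G.neighborFinset v, (f v : ℂ) * (φ : ∀ _ : V, ℂ) x)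
            - (∑ x ∈ G.neighborFinset v, (f x : ℂ) * (φ : ∀ _ : V, ℂ) x) by
        rw [← Finset.sum_sub_distrib]
        refine Finset.sum_congr rfl fun x _ => by ring]
      ring
    -- interaction picture and mean value inequality
    have hDψ : ‖M u‖ ≤ ‖M ψ‖ + D * ‖ψ‖ * t := by
      set T : ℝ → ((lp (fun _ : V => ℂ) 2) →L[ℂ] (lp (fun _ : V => ℂ) 2)) := fun s =>
        NormedSpace.exp (s • (-A)) * (M * NormedSpace.exp (s • A)) with hTdef
      set T' : ℝ → ((lp (fun _ : V => ℂ) 2) →L[ℂ] (lp (fun _ : V => ℂ) 2)) := fun s =>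
        (NormedSpace.exp (s • (-A)) * (-A)) * (M * NormedSpace.exp (s • A))
          + NormedSpace.exp (s • (-A)) * (M * (NormedSpace.exp (s • A) * A)) with hT'def
      have hTd : ∀ s : ℝ, HasDerivAt T (T' s) s := fun s =>
        (hasDerivAt_exp_smul_const (-A) s).mul
          ((hasDerivAt_exp_smul_const A s).const_mul M)
      have hw : ∀ s : ℝ, HasDerivAt (fun r => T r ψ) (T' s ψ) s := by
        intro s
        have h := (((ContinuousLinearMap.apply ℂ (lp (fun _ : V => ℂ) 2) ψ).restrictScalars
          ℝ).hasFDerivAt).comp_hasDerivAt s (hTd s)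
        exact h
      have hT'bound : ∀ s : ℝ, ‖T' s ψ‖ ≤ (D : ℝ) * ‖ψ‖ := by
        intro s
        have hcom : NormedSpace.exp (s • A) * A = A * NormedSpace.exp (s • A) :=
          (((Commute.refl A).smul_left s).exp_left).eq
        have hT's : T' s = NormedSpace.exp (s • (-A))
            * ((M * A - A * M) * NormedSpace.exp (s • A)) := by
          rw [hT'def]
          simp only []
          rw [hcom]
          noncomm_ring
        rw [hT's, ContinuousLinearMap.mul_apply, hunit (-A) hstarNegA s,
          ContinuousLinearMap.mul_apply]
        have hMA : M * A - A * M = (-Complex.I) • (M * H - H * M) := by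
          rw [hA, mul_smul_comm, smul_mul_assoc, smul_sub]
        rw [hMA, ContinuousLinearMap.smul_apply, norm_smul]
        simp only [norm_neg, Complex.norm_I, one_mul]
        calc ‖(M * H - H * M) (NormedSpace.exp (s • A) ψ)‖
            ≤ (D : ℝ) * ‖NormedSpace.exp (s • A) ψ‖ := by
              simpa [ContinuousLinearMap.sub_apply, ContinuousLinearMap.mul_apply]
                using hcomm (NormedSpace.exp (s • A) ψ)
          _ = (D : ℝ) * ‖ψ‖ := by rw [hunit A hstarA s ψ]
      have hmvt := norm_image_sub_le_of_norm_deriv_le_segment'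
        (f := fun r => T r ψ) (f' := fun s => T' s ψ) (C := (D : ℝ) * ‖ψ‖)
        (fun s _ => (hw s).hasDerivWithinAt)
        (fun s _ => hT'bound s) t (Set.right_mem_Icc.mpr ht)
      have hT0 : T 0 ψ = M ψ := by
        simp [hTdef, NormedSpace.exp_zero]
      have hTt : ‖T t ψ‖ = ‖M u‖ := by
        rw [hTdef]
        simp only [ContinuousLinearMap.mul_apply]
        rw [hunit (-A) hstarNegA t, hu]
      calc ‖M u‖ = ‖T t ψ‖ := hTt.symm
        _ ≤ ‖T 0 ψ‖ + ‖T t ψ - T 0 ψ‖ := by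
            have h := norm_add_le (T 0 ψ) (T t ψ - T 0 ψ)
            simpa using h
        _ ≤ ‖M ψ‖ + (D : ℝ) * ‖ψ‖ * (t - 0) := add_le_add (le_of_eq (by rw [hT0])) hmvt
        _ = ‖M ψ‖ + (D : ℝ) * ‖ψ‖ * t := by ring
    -- the initial moment bound
    have hMψ : ‖M ψ‖ ≤ Real.sqrt S := by
      have h1 : ‖M ψ‖ ^ 2 ≤ S := by
        rw [lp_norm_sq]
        refine Summable.tsum_le_tsum (fun v => ?_) (lp_summable_sq (M ψ)) hmom
        rw [hMapp, norm_mul, Complex.norm_real, Real.norm_of_nonneg (hfnn v), mul_pow]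
        refine mul_le_mul_of_nonneg_right ?_ (by positivity)
        exact pow_le_pow_left₀ (hfnn v) (min_le_left _ _) 2
      have h2 : Real.sqrt (‖M ψ‖ ^ 2) ≤ Real.sqrt S := Real.sqrt_le_sqrt h1
      rwa [Real.sqrt_sq (norm_nonneg _)] at h2
    have hfinal : ‖M u‖ ≤ Real.sqrt S + t * D * ‖ψ‖ := by
      refine hDψ.trans ?_
      have h3 : (D : ℝ) * ‖ψ‖ * t = t * D * ‖ψ‖ := by ring
      linarith [hMψ]
    have hsq : ‖M u‖ ^ 2 ≤ (Real.sqrt S + t * D * ‖ψ‖) ^ 2 :=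
      pow_le_pow_left₀ (norm_nonneg _) hfinal 2
    have hrw : ∑' v : V, min (G.dist o v : ℝ) n ^ 2 * ‖(u : ∀ _ : V, ℂ) v‖ ^ 2
        = ‖M u‖ ^ 2 := by
      rw [lp_norm_sq]
      refine tsum_congr fun v => ?_
      rw [hMapp, norm_mul, Complex.norm_real, Real.norm_of_nonneg (hfnn v), mul_pow]
    rw [hrw]
    exact hsq
  -- conclude via finite partial sums
  have hB0 : 0 ≤ Real.sqrt S + t * D * ‖ψ‖ :=
    add_nonneg (Real.sqrt_nonneg _) (by positivity)
  by_cases hsum : Summable fun v : V => (G.dist o v : ℝ) ^ 2 * ‖(u : ∀ _ : V, ℂ) v‖ ^ 2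
  · refine Summable.tsum_le_of_sum_le hsum fun F => ?_
    set n := F.sup (G.dist o) with hn
    have hcongr : ∀ v ∈ F, (G.dist o v : ℝ) ^ 2 * ‖(u : ∀ _ : V, ℂ) v‖ ^ 2
        = min (G.dist o v : ℝ) n ^ 2 * ‖(u : ∀ _ : V, ℂ) v‖ ^ 2 := by
      intro v hv
      rw [min_eq_left (by exact_mod_cast Finset.le_sup (f := G.dist o) hv)]
    rw [Finset.sum_congr rfl hcongr]
    have hsummable : Summable fun v : V =>
        min (G.dist o v : ℝ) n ^ 2 * ‖(u : ∀ _ : V, ℂ) v‖ ^ 2 := by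
      refine Summable.of_nonneg_of_le (fun v => by positivity) (fun v => ?_)
        ((lp_summable_sq u).mul_left ((n : ℝ) ^ 2))
      refine mul_le_mul_of_nonneg_right ?_ (by positivity)
      refine pow_le_pow_left₀ (le_min (by positivity) (by positivity)) (min_le_right _ _) 2
    exact le_trans (Summable.sum_le_tsum F (fun v _ => by positivity) hsummable) (key n)
  · rw [tsum_eq_zero_of_not_summable hsum]
    positivity
end

section
/- Let A be the adjacency operator on ℓ²(ℤ), i.e. (Aψ)(n) = ψ(n−1) + ψ(n+1). Then for any ψ ∈ ℓ²(ℤ) with ∑_n n²|ψ(n)|² < ∞, lim_{t→∞} t^{-2} ∑_n n² |e^{itA}ψ(n)|² = 2‖ψ‖² − ⟨ψ, S₂ψ⟩, where (S₂ψ)(n) = ψ(n−2) + ψ(n+2). Moreover this limit is strictly positive when ψ ≠ 0. -/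
open Filter NormedSpace Complex
open scoped ComplexConjugate ENNReal Nat

noncomputable section AuxBallistic

local notation "E2" => lp (fun _ : ℤ => ℂ) 2
local notation "⟪" x ", " y "⟫" => @inner ℂ _ _ x y

private lemma rpow_two' (x : ℝ) : x ^ ((2:ℝ≥0∞)).toReal = x ^ (2:ℕ) := by
  norm_num

private lemma summable_sq (f : E2) :
    Summable fun n : ℤ => ‖(f : ∀ _ : ℤ, ℂ) n‖ ^ 2 := by
  have h := (lp.memℓp f).summable (p := 2) (by norm_num)
  simpa [rpow_two'] using h

private lemma memℓp_shift (f : E2) (j : ℤ) :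
    Memℓp (fun n => (f : ∀ _ : ℤ, ℂ) (n + j)) 2 := by
  apply memℓp_gen
  have := ((Equiv.addRight j).summable_iff
      (f := fun n : ℤ => ‖(f : ∀ _ : ℤ, ℂ) n‖ ^ (2:ℝ≥0∞).toReal)).2
      ((lp.memℓp f).summable (by norm_num))
  simpa [Equiv.coe_addRight, Function.comp_def] using this

/-- shift as element of lp -/
private def shiftE (j : ℤ) (f : E2) : E2 := ⟨fun n => (f : ∀ _ : ℤ, ℂ) (n + j), memℓp_shift f j⟩

@[simp] private lemma shiftE_apply (j : ℤ) (f : E2) (n : ℤ) :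
    (shiftE j f : ∀ _ : ℤ, ℂ) n = (f : ∀ _ : ℤ, ℂ) (n + j) := rfl

/-- coordinate evaluation as a continuous linear map -/
private def ev (n : ℤ) : E2 →L[ℂ] ℂ :=
  LinearMap.mkContinuous
    { toFun := fun f => (f : ∀ _ : ℤ, ℂ) n
      map_add' := fun f g => by simp [lp.coeFn_add]
      map_smul' := fun c f => by simp [lp.coeFn_smul] }
    1 (fun f => by
      show ‖(f : ∀ _ : ℤ, ℂ) n‖ ≤ 1 * ‖f‖
      simpa using lp.norm_apply_le_norm (by norm_num) f n)

@[simp] private lemma ev_apply (n : ℤ) (f : E2) : ev n f = (f : ∀ _ : ℤ, ℂ) n := rfl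


private lemma exp_coord (T : E2 →L[ℂ] E2) (f : E2) (n : ℤ) :
    (NormedSpace.exp T f : ∀ _ : ℤ, ℂ) n = ∑' k : ℕ, (k !⁻¹ : ℂ) * ((T ^ k) f : ∀ _ : ℤ, ℂ) n := by
  have h0 : NormedSpace.exp T = ∑' k : ℕ, (k !⁻¹ : ℂ) • T ^ k := by
    rw [exp_eq_tsum (𝕂 := ℂ)]
  have hs : Summable fun k : ℕ => (k !⁻¹ : ℂ) • T ^ k := expSeries_summable' T
  have key := ((ev n).comp (ContinuousLinearMap.apply ℂ E2 f)).map_tsum hs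
  simp only [ContinuousLinearMap.comp_apply, ContinuousLinearMap.apply_apply] at key
  rw [h0]
  refine Eq.trans key (tsum_congr fun k => ?_)
  show ev n (((k !⁻¹ : ℂ) • T ^ k) f) = _
  simp [ContinuousLinearMap.smul_apply, lp.coeFn_smul, Pi.smul_apply, smul_eq_mul]

private lemma exp_smul_coord (A : E2 →L[ℂ] E2) (z : ℂ) (f : E2) (n : ℤ) :
    (NormedSpace.exp (z • A) f : ∀ _ : ℤ, ℂ) n
      = ∑' k : ℕ, (k !⁻¹ : ℂ) * z ^ k * ((A ^ k) f : ∀ _ : ℤ, ℂ) n := by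
  rw [exp_coord]
  congr 1; ext k
  rw [smul_pow]
  simp [ContinuousLinearMap.smul_apply, lp.coeFn_smul, Pi.smul_apply, smul_eq_mul, mul_assoc]

private lemma coord_bound (A : E2 →L[ℂ] E2) (f : E2) (n : ℤ) (k : ℕ) :
    ‖((A ^ k) f : ∀ _ : ℤ, ℂ) n‖ ≤ ‖A‖ ^ k * ‖f‖ := by
  have hAk : ‖A ^ k‖ ≤ ‖A‖ ^ k := by
    rcases Nat.eq_zero_or_pos k with h | h
    · subst h
      rw [pow_zero, pow_zero, ContinuousLinearMap.one_def]
      exact ContinuousLinearMap.norm_id_le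
    · exact norm_pow_le' A h
  calc ‖((A ^ k) f : ∀ _ : ℤ, ℂ) n‖ ≤ ‖(A ^ k) f‖ := lp.norm_apply_le_norm (by norm_num) _ n
    _ ≤ ‖A ^ k‖ * ‖f‖ := (A ^ k).le_opNorm f
    _ ≤ ‖A‖ ^ k * ‖f‖ := by gcongr

private lemma summable_coord (A : E2 →L[ℂ] E2) (z : ℂ) (f : E2) (n : ℤ) :
    Summable fun k : ℕ => (k !⁻¹ : ℂ) * z ^ k * ((A ^ k) f : ∀ _ : ℤ, ℂ) n := by
  apply Summable.of_norm
  refine Summable.of_nonneg_of_le (fun k => norm_nonneg _) (fun k => ?_)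
    ((Real.summable_pow_div_factorial (‖z‖ * ‖A‖)).mul_right ‖f‖)
  calc ‖(k !⁻¹ : ℂ) * z ^ k * ((A ^ k) f : ∀ _ : ℤ, ℂ) n‖
      = ((k ! : ℝ))⁻¹ * ‖z‖ ^ k * ‖((A ^ k) f : ∀ _ : ℤ, ℂ) n‖ := by
        simp [norm_mul, norm_pow]
    _ ≤ ((k ! : ℝ))⁻¹ * ‖z‖ ^ k * (‖A‖ ^ k * ‖f‖) := by
        have h0 : (0:ℝ) ≤ ((k ! : ℝ))⁻¹ * ‖z‖ ^ k := by positivity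
        exact mul_le_mul_of_nonneg_left (coord_bound A f n k) h0
    _ = (‖z‖ * ‖A‖) ^ k / (k !) * ‖f‖ := by rw [mul_pow]; ring

private lemma norm_sq_tsum (f : E2) : ‖f‖ ^ 2 = ∑' n : ℤ, ‖(f : ∀ _ : ℤ, ℂ) n‖ ^ 2 := by
  have h := lp.norm_rpow_eq_tsum (p := 2) (by norm_num) f
  simpa [rpow_two'] using h

private lemma key1 (A : E2 →L[ℂ] E2)
    (hA : ∀ (f : E2) (n : ℤ), (A f : ∀ _ : ℤ, ℂ) n = f (n - 1) + f (n + 1))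
    (ψ β : E2) (hβ : ∀ n, (β : ∀ _ : ℤ, ℂ) n = ψ (n - 1) - ψ (n + 1)) :
    ∀ (k : ℕ) (n : ℤ), ((A ^ k) β : ∀ _ : ℤ, ℂ) n
      = ((A ^ k) ψ : ∀ _ : ℤ, ℂ) (n - 1) - ((A ^ k) ψ : ∀ _ : ℤ, ℂ) (n + 1) := by
  intro k
  induction k with
  | zero => intro n; simpa using hβ n
  | succ k ih =>
    intro n
    have h1 : ((A ^ (k+1)) β : ∀ _ : ℤ, ℂ) n
        = ((A ^ k) β : ∀ _ : ℤ, ℂ) (n - 1) + ((A ^ k) β : ∀ _ : ℤ, ℂ) (n + 1) := by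
      rw [pow_succ', ContinuousLinearMap.mul_apply, hA]
    have h2 : ((A ^ (k+1)) ψ : ∀ _ : ℤ, ℂ) (n - 1)
        = ((A ^ k) ψ : ∀ _ : ℤ, ℂ) (n - 1 - 1) + ((A ^ k) ψ : ∀ _ : ℤ, ℂ) (n - 1 + 1) := by
      rw [pow_succ', ContinuousLinearMap.mul_apply, hA]
    have h3 : ((A ^ (k+1)) ψ : ∀ _ : ℤ, ℂ) (n + 1)
        = ((A ^ k) ψ : ∀ _ : ℤ, ℂ) (n + 1 - 1) + ((A ^ k) ψ : ∀ _ : ℤ, ℂ) (n + 1 + 1) := by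
      rw [pow_succ', ContinuousLinearMap.mul_apply, hA]
    have e1 : n - 1 + 1 = n := by ring
    have e2 : n + 1 - 1 = n := by ring
    rw [h1, h2, h3, ih, ih, e1, e2]
    ring

private lemma key2 (A : E2 →L[ℂ] E2)
    (hA : ∀ (f : E2) (n : ℤ), (A f : ∀ _ : ℤ, ℂ) n = f (n - 1) + f (n + 1))
    (ψ χ β : E2) (hχ : ∀ n : ℤ, (χ : ∀ _ : ℤ, ℂ) n = (n : ℂ) * ψ n)
    (hβ : ∀ n, (β : ∀ _ : ℤ, ℂ) n = ψ (n - 1) - ψ (n + 1)) :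
    ∀ (k : ℕ) (n : ℤ), (n : ℂ) * ((A ^ (k+1)) ψ : ∀ _ : ℤ, ℂ) n
      = ((A ^ (k+1)) χ : ∀ _ : ℤ, ℂ) n + ((k : ℂ) + 1) * ((A ^ k) β : ∀ _ : ℤ, ℂ) n := by
  intro k
  induction k with
  | zero =>
    intro n
    have e1 : (A ψ : ∀ _ : ℤ, ℂ) n = ψ (n - 1) + ψ (n + 1) := hA ψ n
    have e2 : (A χ : ∀ _ : ℤ, ℂ) n = χ (n - 1) + χ (n + 1) := hA χ n
    have e3 : (χ : ∀ _ : ℤ, ℂ) (n - 1) = ((n : ℂ) - 1) * ψ (n - 1) := by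
      rw [hχ]; push_cast; ring
    have e4 : (χ : ∀ _ : ℤ, ℂ) (n + 1) = ((n : ℂ) + 1) * ψ (n + 1) := by
      rw [hχ]; push_cast; ring
    have e5 := hβ n
    simp only [zero_add, pow_one, pow_zero, ContinuousLinearMap.one_apply]
    linear_combination (n : ℂ) * e1 - e2 - e3 - e4 - e5
  | succ k ih =>
    intro n
    have e1 : ((A ^ (k+2)) ψ : ∀ _ : ℤ, ℂ) n
        = ((A ^ (k+1)) ψ : ∀ _ : ℤ, ℂ) (n - 1) + ((A ^ (k+1)) ψ : ∀ _ : ℤ, ℂ) (n + 1) := by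
      rw [pow_succ', ContinuousLinearMap.mul_apply, hA]
    have e2 : ((A ^ (k+2)) χ : ∀ _ : ℤ, ℂ) n
        = ((A ^ (k+1)) χ : ∀ _ : ℤ, ℂ) (n - 1) + ((A ^ (k+1)) χ : ∀ _ : ℤ, ℂ) (n + 1) := by
      rw [pow_succ', ContinuousLinearMap.mul_apply, hA]
    have e3 : ((A ^ (k+1)) β : ∀ _ : ℤ, ℂ) n
        = ((A ^ k) β : ∀ _ : ℤ, ℂ) (n - 1) + ((A ^ k) β : ∀ _ : ℤ, ℂ) (n + 1) := by
      rw [pow_succ', ContinuousLinearMap.mul_apply, hA]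
    have e4 : ((A ^ (k+1)) β : ∀ _ : ℤ, ℂ) n
        = ((A ^ (k+1)) ψ : ∀ _ : ℤ, ℂ) (n - 1) - ((A ^ (k+1)) ψ : ∀ _ : ℤ, ℂ) (n + 1) :=
      key1 A hA ψ β hβ (k+1) n
    have ih1 := ih (n - 1)
    have ih2 := ih (n + 1)
    push_cast [-FunLike.coe_pow_eq_iterate] at ih1 ih2
    push_cast [-FunLike.coe_pow_eq_iterate]
    linear_combination (n : ℂ) * e1 + ih1 + ih2 - e2 - ((k : ℂ) + 1) * e3 - e4

private lemma key2' (A : E2 →L[ℂ] E2)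
    (hA : ∀ (f : E2) (n : ℤ), (A f : ∀ _ : ℤ, ℂ) n = f (n - 1) + f (n + 1))
    (ψ χ β : E2) (hχ : ∀ n : ℤ, (χ : ∀ _ : ℤ, ℂ) n = (n : ℂ) * ψ n)
    (hβ : ∀ n, (β : ∀ _ : ℤ, ℂ) n = ψ (n - 1) - ψ (n + 1)) :
    ∀ (k : ℕ) (n : ℤ), (n : ℂ) * ((A ^ k) ψ : ∀ _ : ℤ, ℂ) n
      = ((A ^ k) χ : ∀ _ : ℤ, ℂ) n + (k : ℂ) * ((A ^ (k-1)) β : ∀ _ : ℤ, ℂ) n := by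
  intro k n
  cases k with
  | zero => simpa using (hχ n).symm
  | succ k =>
    have := key2 A hA ψ χ β hχ hβ k n
    push_cast
    push_cast at this
    simpa using this

private lemma coord_main (A : E2 →L[ℂ] E2)
    (hA : ∀ (f : E2) (n : ℤ), (A f : ∀ _ : ℤ, ℂ) n = f (n - 1) + f (n + 1))
    (ψ χ β : E2) (hχ : ∀ n : ℤ, (χ : ∀ _ : ℤ, ℂ) n = (n : ℂ) * ψ n)
    (hβ : ∀ n, (β : ∀ _ : ℤ, ℂ) n = ψ (n - 1) - ψ (n + 1)) (z : ℂ) (n : ℤ) :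
    (n : ℂ) * (NormedSpace.exp (z • A) ψ : ∀ _ : ℤ, ℂ) n
      = (NormedSpace.exp (z • A) χ : ∀ _ : ℤ, ℂ) n + z * (NormedSpace.exp (z • A) β : ∀ _ : ℤ, ℂ) n := by
  rw [exp_smul_coord, exp_smul_coord, exp_smul_coord, ← tsum_mul_left]
  set a : ℕ → ℂ := fun k => (k !⁻¹ : ℂ) * z ^ k * ((A ^ k) χ : ∀ _ : ℤ, ℂ) n with ha
  set b : ℕ → ℂ := fun k => (k : ℂ) * ((k !⁻¹ : ℂ) * z ^ k * ((A ^ (k-1)) β : ∀ _ : ℤ, ℂ) n)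
    with hb
  have hterm : ∀ k : ℕ, (n : ℂ) * ((k !⁻¹ : ℂ) * z ^ k * ((A ^ k) ψ : ∀ _ : ℤ, ℂ) n)
      = a k + b k := by
    intro k
    have := key2' A hA ψ χ β hχ hβ k n
    simp only [ha, hb]
    linear_combination ((k !⁻¹ : ℂ) * z ^ k) * this
  have hsa : Summable a := summable_coord A z χ n
  have hsψ : Summable fun k : ℕ => (n : ℂ) * ((k !⁻¹ : ℂ) * z ^ k
      * ((A ^ k) ψ : ∀ _ : ℤ, ℂ) n) := (summable_coord A z ψ n).mul_left _
  have hsb : Summable b := by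
    have : b = fun k => (n : ℂ) * ((k !⁻¹ : ℂ) * z ^ k * ((A ^ k) ψ : ∀ _ : ℤ, ℂ) n) - a k := by
      funext k; have h := hterm k; linear_combination -h
    rw [this]; exact hsψ.sub hsa
  have hsplit : ∑' k : ℕ, (n : ℂ) * ((k !⁻¹ : ℂ) * z ^ k * ((A ^ k) ψ : ∀ _ : ℤ, ℂ) n)
      = (∑' k, a k) + ∑' k, b k := by
    rw [← hsa.tsum_add hsb]
    exact tsum_congr hterm
  rw [hsplit]
  congr 1
  rw [hsb.tsum_eq_zero_add]
  have hb0 : b 0 = 0 := by simp [hb]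
  have hbs : ∀ k : ℕ, b (k + 1) = z * ((k !⁻¹ : ℂ) * z ^ k * ((A ^ k) β : ∀ _ : ℤ, ℂ) n) := by
    intro k
    have hk : ((k ! : ℕ) : ℂ) ≠ 0 := Nat.cast_ne_zero.2 k.factorial_ne_zero
    have hk1 : ((k : ℂ) + 1) ≠ 0 := by
      have : ((k + 1 : ℕ) : ℂ) ≠ 0 := Nat.cast_ne_zero.2 k.succ_ne_zero
      push_cast at this; exact this
    simp only [hb, Nat.add_sub_cancel, Nat.factorial_succ]
    push_cast
    field_simp
    ring
  rw [hb0, zero_add]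
  rw [tsum_congr hbs, tsum_mul_left]

private lemma inner_shift (x y : E2) (j : ℤ) :
    ⟪shiftE j x, y⟫ = ⟪x, shiftE (-j) y⟫ := by
  rw [lp.inner_eq_tsum, lp.inner_eq_tsum]
  have := (Equiv.subRight j).tsum_eq
    (f := fun n : ℤ => (inner ℂ ((shiftE j x : ∀ _ : ℤ, ℂ) n) (y n) : ℂ))
  rw [← this]
  apply tsum_congr
  intro m
  simp only [Equiv.subRight_apply, shiftE_apply, RCLike.inner_apply']
  rw [sub_add_cancel, sub_eq_add_neg]

private lemma selfadj (A : E2 →L[ℂ] E2)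
    (hA : ∀ (f : E2) (n : ℤ), (A f : ∀ _ : ℤ, ℂ) n = f (n - 1) + f (n + 1)) :
    IsSelfAdjoint A := by
  rw [ContinuousLinearMap.isSelfAdjoint_iff_isSymmetric]
  intro x y
  have hrep : ∀ f : E2, A f = shiftE (-1) f + shiftE 1 f := by
    intro f
    apply lp.ext
    funext n
    rw [lp.coeFn_add]
    simp only [Pi.add_apply, shiftE_apply, hA]
    rw [sub_eq_add_neg]
  show ⟪A x, y⟫ = ⟪x, A y⟫
  rw [hrep x, hrep y, inner_add_left, inner_add_right]
  have h1 := inner_shift x y (-1)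
  have h2 := inner_shift x y 1
  rw [neg_neg] at h1
  rw [h1, h2, add_comm]

private lemma exp_isometry (A : E2 →L[ℂ] E2) (hsa : IsSelfAdjoint A) (z : ℂ)
    (hz : star z = -z) (v : E2) : ‖NormedSpace.exp (z • A) v‖ = ‖v‖ := by
  have hskew : z • A ∈ skewAdjoint (E2 →L[ℂ] E2) := by
    rw [skewAdjoint.mem_iff, star_smul, hsa.star_eq, hz, neg_smul]
  let +nondep : NormedAlgebra ℚ (E2 →L[ℂ] E2) := .restrictScalars ℚ ℂ _
  have hU := exp_mem_unitary_of_mem_skewAdjoint hskew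
  have h1 : star (NormedSpace.exp (z • A)) * NormedSpace.exp (z • A) = 1 := (Unitary.mem_iff.1 hU).1
  have h2 : ⟪NormedSpace.exp (z • A) v, NormedSpace.exp (z • A) v⟫ = ⟪v, v⟫ := by
    rw [← ContinuousLinearMap.adjoint_inner_left (NormedSpace.exp (z • A)) v (NormedSpace.exp (z • A) v)]
    rw [← ContinuousLinearMap.star_eq_adjoint]
    rw [show star (NormedSpace.exp (z • A)) (NormedSpace.exp (z • A) v)
        = (star (NormedSpace.exp (z • A)) * NormedSpace.exp (z • A)) v from rfl, h1]
    simp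
  have h3 : ‖NormedSpace.exp (z • A) v‖ ^ 2 = ‖v‖ ^ 2 := by
    rw [← inner_self_eq_norm_sq (𝕜 := ℂ), ← inner_self_eq_norm_sq (𝕜 := ℂ), h2]
  exact (sq_eq_sq₀ (norm_nonneg _) (norm_nonneg _)).1 h3

set_option maxHeartbeats 1000000 in
/-- Exact ballistic transport for the adjacency operator on `ℤ` (first moment):
`lim_{t→∞} t^{-2} ∑_n n²|e^{itA}ψ(n)|² = 2‖ψ‖² − ⟨ψ, S₂ψ⟩`, which is positive if
`ψ ≠ 0`. -/
theorem adjacency_Z_ballistic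
    (A : lp (fun _ : ℤ => ℂ) 2 →L[ℂ] lp (fun _ : ℤ => ℂ) 2)
    (hA : ∀ (ψ : lp (fun _ : ℤ => ℂ) 2) (n : ℤ),
      (A ψ : ∀ _ : ℤ, ℂ) n = (ψ : ∀ _ : ℤ, ℂ) (n - 1) + (ψ : ∀ _ : ℤ, ℂ) (n + 1))
    (ψ : lp (fun _ : ℤ => ℂ) 2)
    (hmom : Summable fun n : ℤ => (n : ℝ) ^ 2 * ‖(ψ : ∀ _ : ℤ, ℂ) n‖ ^ 2) :
    Tendsto (fun t : ℝ =>
        (∑' n : ℤ, (n : ℝ) ^ 2 *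
          ‖(NormedSpace.exp (((t : ℂ) * Complex.I) • A) ψ : ∀ _ : ℤ, ℂ) n‖ ^ 2) / t ^ 2)
      atTop
      (nhds (2 * ‖ψ‖ ^ 2 -
        (∑' n : ℤ, (starRingEnd ℂ) ((ψ : ∀ _ : ℤ, ℂ) n) *
          ((ψ : ∀ _ : ℤ, ℂ) (n - 2) + (ψ : ∀ _ : ℤ, ℂ) (n + 2))).re)) ∧
    (ψ ≠ 0 → 0 < 2 * ‖ψ‖ ^ 2 -
        (∑' n : ℤ, (starRingEnd ℂ) ((ψ : ∀ _ : ℤ, ℂ) n) *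
          ((ψ : ∀ _ : ℤ, ℂ) (n - 2) + (ψ : ∀ _ : ℤ, ℂ) (n + 2))).re) := by
  classical
  have hsa : IsSelfAdjoint A := selfadj A hA
  -- the vector χ with coordinates n * ψ n
  have hχmem : Memℓp (fun n : ℤ => (n : ℂ) * (ψ : ∀ _ : ℤ, ℂ) n) 2 := by
    apply memℓp_gen
    have he : (fun n : ℤ => ‖(n : ℂ) * (ψ : ∀ _ : ℤ, ℂ) n‖ ^ (2 : ℝ≥0∞).toReal)
        = fun n : ℤ => (n : ℝ) ^ 2 * ‖(ψ : ∀ _ : ℤ, ℂ) n‖ ^ 2 := by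
      funext n
      rw [rpow_two']
      simp [norm_mul, mul_pow, sq_abs]
    rw [he]; exact hmom
  set χ : lp (fun _ : ℤ => ℂ) 2 := ⟨fun n : ℤ => (n : ℂ) * (ψ : ∀ _ : ℤ, ℂ) n, hχmem⟩ with hχdef
  have hχ : ∀ n : ℤ, (χ : ∀ _ : ℤ, ℂ) n = (n : ℂ) * (ψ : ∀ _ : ℤ, ℂ) n := fun n => rfl
  -- the vector β with coordinates ψ (n-1) - ψ (n+1)
  set β : lp (fun _ : ℤ => ℂ) 2 := shiftE (-1) ψ - shiftE 1 ψ with hβdef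
  have hβ : ∀ n : ℤ, (β : ∀ _ : ℤ, ℂ) n
      = (ψ : ∀ _ : ℤ, ℂ) (n - 1) - (ψ : ∀ _ : ℤ, ℂ) (n + 1) := by
    intro n
    rw [hβdef, lp.coeFn_sub]
    simp only [Pi.sub_apply, shiftE_apply]
    rw [sub_eq_add_neg n 1]
  -- the correlation sum
  set c : ℂ := ∑' n : ℤ, (starRingEnd ℂ) ((ψ : ∀ _ : ℤ, ℂ) n) * (ψ : ∀ _ : ℤ, ℂ) (n + 2)
    with hc
  have hsp : Summable fun n : ℤ =>
      (starRingEnd ℂ) ((ψ : ∀ _ : ℤ, ℂ) n) * (ψ : ∀ _ : ℤ, ℂ) (n + 2) := by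
    have := lp.summable_inner (𝕜 := ℂ) ψ (shiftE 2 ψ)
    simpa [RCLike.inner_apply', shiftE_apply, mul_comm] using this
  have hsm : Summable fun n : ℤ =>
      (starRingEnd ℂ) ((ψ : ∀ _ : ℤ, ℂ) n) * (ψ : ∀ _ : ℤ, ℂ) (n - 2) := by
    have := lp.summable_inner (𝕜 := ℂ) ψ (shiftE (-2) ψ)
    simpa [RCLike.inner_apply', shiftE_apply, sub_eq_add_neg, mul_comm] using this
  have hsplit : (∑' n : ℤ, (starRingEnd ℂ) ((ψ : ∀ _ : ℤ, ℂ) n) *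
        ((ψ : ∀ _ : ℤ, ℂ) (n - 2) + (ψ : ∀ _ : ℤ, ℂ) (n + 2)))
      = (∑' n : ℤ, (starRingEnd ℂ) ((ψ : ∀ _ : ℤ, ℂ) n) * (ψ : ∀ _ : ℤ, ℂ) (n - 2)) + c := by
    rw [hc, ← hsm.tsum_add hsp]
    exact tsum_congr fun n => by ring
  have hconj : (∑' n : ℤ, (starRingEnd ℂ) ((ψ : ∀ _ : ℤ, ℂ) n) * (ψ : ∀ _ : ℤ, ℂ) (n - 2))
      = (starRingEnd ℂ) c := by
    have h1 := (Equiv.addRight (2:ℤ)).tsum_eq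
      (f := fun n : ℤ => (starRingEnd ℂ) ((ψ : ∀ _ : ℤ, ℂ) n) * (ψ : ∀ _ : ℤ, ℂ) (n - 2))
    rw [← h1]
    calc ∑' m : ℤ, (starRingEnd ℂ) ((ψ : ∀ _ : ℤ, ℂ) ((Equiv.addRight (2:ℤ)) m))
          * (ψ : ∀ _ : ℤ, ℂ) ((Equiv.addRight (2:ℤ)) m - 2)
        = ∑' m : ℤ, star ((starRingEnd ℂ) ((ψ : ∀ _ : ℤ, ℂ) m) * (ψ : ∀ _ : ℤ, ℂ) (m + 2)) := by
          refine tsum_congr fun m => ?_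
          simp only [Equiv.coe_addRight, add_sub_cancel_right, star_mul', starRingEnd_apply,
            star_star]
          ring
      _ = star (∑' m : ℤ, (starRingEnd ℂ) ((ψ : ∀ _ : ℤ, ℂ) m) * (ψ : ∀ _ : ℤ, ℂ) (m + 2)) :=
          tsum_star.symm
      _ = (starRingEnd ℂ) c := by rw [hc, starRingEnd_apply]
  have hre : (∑' n : ℤ, (starRingEnd ℂ) ((ψ : ∀ _ : ℤ, ℂ) n) *
        ((ψ : ∀ _ : ℤ, ℂ) (n - 2) + (ψ : ∀ _ : ℤ, ℂ) (n + 2))).re = 2 * c.re := by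
    rw [hsplit, hconj]
    simp only [Complex.add_re, Complex.conj_re]
    ring
  -- computation of ‖β‖²
  have hβsq : ‖β‖ ^ 2 = 2 * ‖ψ‖ ^ 2 - 2 * c.re := by
    rw [norm_sq_tsum]
    have hterm : ∀ n : ℤ, ‖(β : ∀ _ : ℤ, ℂ) n‖ ^ 2
        = ‖(ψ : ∀ _ : ℤ, ℂ) (n - 1)‖ ^ 2 + ‖(ψ : ∀ _ : ℤ, ℂ) (n + 1)‖ ^ 2
          - 2 * ((starRingEnd ℂ) ((ψ : ∀ _ : ℤ, ℂ) (n - 1)) * (ψ : ∀ _ : ℤ, ℂ) (n + 1)).re := by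
      intro n
      have hn : ∀ w : ℂ, ‖w‖ ^ 2 = Complex.normSq w := fun w => by
        rw [Complex.sq_norm]
      rw [hβ, hn, hn, hn, Complex.normSq_sub]
      have h2 : (starRingEnd ℂ) ((ψ : ∀ _ : ℤ, ℂ) (n - 1)) * (ψ : ∀ _ : ℤ, ℂ) (n + 1)
          = (starRingEnd ℂ) ((ψ : ∀ _ : ℤ, ℂ) (n - 1)
            * (starRingEnd ℂ) ((ψ : ∀ _ : ℤ, ℂ) (n + 1))) := by
        rw [map_mul, Complex.conj_conj]
      rw [h2, Complex.conj_re]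
    rw [tsum_congr hterm]
    have hsq := summable_sq ψ
    have hsqm : Summable fun n : ℤ => ‖(ψ : ∀ _ : ℤ, ℂ) (n - 1)‖ ^ 2 := by
      have := ((Equiv.subRight (1:ℤ)).summable_iff
        (f := fun n : ℤ => ‖(ψ : ∀ _ : ℤ, ℂ) n‖ ^ 2)).2 hsq
      simpa [Function.comp_def] using this
    have hsqp : Summable fun n : ℤ => ‖(ψ : ∀ _ : ℤ, ℂ) (n + 1)‖ ^ 2 := by
      have := ((Equiv.addRight (1:ℤ)).summable_iff
        (f := fun n : ℤ => ‖(ψ : ∀ _ : ℤ, ℂ) n‖ ^ 2)).2 hsq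
      simpa [Function.comp_def] using this
    have hsinner : Summable fun n : ℤ =>
        (starRingEnd ℂ) ((ψ : ∀ _ : ℤ, ℂ) (n - 1)) * (ψ : ∀ _ : ℤ, ℂ) (n + 1) := by
      have := lp.summable_inner (𝕜 := ℂ) (shiftE (-1) ψ) (shiftE 1 ψ)
      simpa [RCLike.inner_apply', shiftE_apply, sub_eq_add_neg, mul_comm] using this
    have hsre : Summable fun n : ℤ =>
        ((starRingEnd ℂ) ((ψ : ∀ _ : ℤ, ℂ) (n - 1)) * (ψ : ∀ _ : ℤ, ℂ) (n + 1)).re :=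
      hsinner.map Complex.reAddGroupHom Complex.continuous_re
    rw [(hsqm.add hsqp).tsum_sub (hsre.mul_left 2), hsqm.tsum_add hsqp, tsum_mul_left]
    have t1 : ∑' n : ℤ, ‖(ψ : ∀ _ : ℤ, ℂ) (n - 1)‖ ^ 2 = ‖ψ‖ ^ 2 := by
      rw [norm_sq_tsum]
      have := (Equiv.subRight (1:ℤ)).tsum_eq (f := fun n : ℤ => ‖(ψ : ∀ _ : ℤ, ℂ) n‖ ^ 2)
      simpa using this
    have t2 : ∑' n : ℤ, ‖(ψ : ∀ _ : ℤ, ℂ) (n + 1)‖ ^ 2 = ‖ψ‖ ^ 2 := by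
      rw [norm_sq_tsum]
      have := (Equiv.addRight (1:ℤ)).tsum_eq (f := fun n : ℤ => ‖(ψ : ∀ _ : ℤ, ℂ) n‖ ^ 2)
      simpa using this
    have t3 : ∑' n : ℤ, ((starRingEnd ℂ) ((ψ : ∀ _ : ℤ, ℂ) (n - 1))
        * (ψ : ∀ _ : ℤ, ℂ) (n + 1)).re = c.re := by
      have h1 : ∀ n : ℤ, ((starRingEnd ℂ) ((ψ : ∀ _ : ℤ, ℂ) (n - 1))
          * (ψ : ∀ _ : ℤ, ℂ) (n + 1)).re
          = (fun m : ℤ => ((starRingEnd ℂ) ((ψ : ∀ _ : ℤ, ℂ) m)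
            * (ψ : ∀ _ : ℤ, ℂ) (m + 2)).re) ((Equiv.subRight (1:ℤ)) n) := by
        intro n
        simp only [Equiv.subRight_apply]
        rw [show n - 1 + 2 = n + 1 from by ring]
      rw [tsum_congr h1, (Equiv.subRight (1:ℤ)).tsum_eq
        (f := fun m : ℤ => ((starRingEnd ℂ) ((ψ : ∀ _ : ℤ, ℂ) m)
          * (ψ : ∀ _ : ℤ, ℂ) (m + 2)).re), hc]
      exact (Complex.re_tsum hsp).symm
    rw [t1, t2, t3]
    ring
  -- coordinates of the evolved state
  have hid : ∀ (t : ℝ) (n : ℤ),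
      ((NormedSpace.exp (((t:ℂ) * Complex.I) • A) χ
        + ((t:ℂ) * Complex.I) • NormedSpace.exp (((t:ℂ) * Complex.I) • A) β : lp (fun _ : ℤ => ℂ) 2)
          : ∀ _ : ℤ, ℂ) n
      = (n : ℂ) * (NormedSpace.exp (((t:ℂ) * Complex.I) • A) ψ : ∀ _ : ℤ, ℂ) n := by
    intro t n
    rw [lp.coeFn_add, Pi.add_apply, lp.coeFn_smul, Pi.smul_apply, smul_eq_mul]
    exact (coord_main A hA ψ χ β hχ hβ ((t:ℂ) * Complex.I) n).symm
  have hzstar : ∀ t : ℝ, star ((t:ℂ) * Complex.I) = -((t:ℂ) * Complex.I) := by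
    intro t
    simp only [star_mul', Complex.conj_ofReal, Complex.conj_I, RCLike.star_def]
    ring
  have hnorm : ∀ t : ℝ,
      (∑' n : ℤ, (n : ℝ) ^ 2 *
        ‖(NormedSpace.exp (((t : ℂ) * Complex.I) • A) ψ : ∀ _ : ℤ, ℂ) n‖ ^ 2)
      = ‖χ + ((t:ℂ) * Complex.I) • β‖ ^ 2 := by
    intro t
    have h2 : NormedSpace.exp (((t:ℂ) * Complex.I) • A) χ
        + ((t:ℂ) * Complex.I) • NormedSpace.exp (((t:ℂ) * Complex.I) • A) β
        = NormedSpace.exp (((t:ℂ) * Complex.I) • A) (χ + ((t:ℂ) * Complex.I) • β) := by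
      rw [map_add, map_smul]
    have h3 : (∑' n : ℤ, (n : ℝ) ^ 2 *
        ‖(NormedSpace.exp (((t : ℂ) * Complex.I) • A) ψ : ∀ _ : ℤ, ℂ) n‖ ^ 2)
        = ‖NormedSpace.exp (((t:ℂ) * Complex.I) • A) χ
          + ((t:ℂ) * Complex.I) • NormedSpace.exp (((t:ℂ) * Complex.I) • A) β‖ ^ 2 := by
      rw [norm_sq_tsum]
      refine tsum_congr fun n => ?_
      rw [hid t n]
      simp [norm_mul, mul_pow, sq_abs]
    rw [h3, h2, exp_isometry A hsa ((t:ℂ) * Complex.I) (hzstar t)]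
  -- the limit
  have hF : Tendsto (fun t : ℝ => ‖((t:ℂ))⁻¹ • χ + Complex.I • β‖ ^ 2) atTop
      (nhds (‖β‖ ^ 2)) := by
    have h0 : Tendsto (fun t : ℝ => ((t:ℂ))⁻¹) atTop (nhds 0) := by
      have h1 := (Complex.continuous_ofReal.tendsto (0:ℝ)).comp tendsto_inv_atTop_zero
      rw [Complex.ofReal_zero] at h1
      exact h1.congr fun t => Complex.ofReal_inv t
    have h2 : Tendsto (fun t : ℝ => ((t:ℂ))⁻¹ • χ + Complex.I • β) atTop
        (nhds ((0:ℂ) • χ + Complex.I • β)) := (h0.smul_const χ).add_const _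
    have h3 := (h2.norm).pow 2
    have h4 : ‖(0:ℂ) • χ + Complex.I • β‖ ^ 2 = ‖β‖ ^ 2 := by
      simp [norm_smul, Complex.norm_I]
    rw [h4] at h3
    exact h3
  have heq : ∀ᶠ t : ℝ in atTop,
      (∑' n : ℤ, (n : ℝ) ^ 2 *
        ‖(NormedSpace.exp (((t : ℂ) * Complex.I) • A) ψ : ∀ _ : ℤ, ℂ) n‖ ^ 2) / t ^ 2
      = ‖((t:ℂ))⁻¹ • χ + Complex.I • β‖ ^ 2 := by
    filter_upwards [eventually_gt_atTop (0:ℝ)] with t ht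
    rw [hnorm t]
    have htC : ((t:ℂ)) ≠ 0 := by exact_mod_cast ht.ne'
    have h4 : ((t:ℂ))⁻¹ • (χ + ((t:ℂ) * Complex.I) • β) = ((t:ℂ))⁻¹ • χ + Complex.I • β := by
      rw [smul_add, smul_smul, ← mul_assoc, inv_mul_cancel₀ htC, one_mul]
    rw [← h4, norm_smul, mul_pow, norm_inv]
    have h5 : ‖((t:ℂ))‖ = t := by
      rw [Complex.norm_real]
      exact abs_of_pos ht
    rw [h5, inv_pow]
    rw [div_eq_mul_inv, mul_comm]
  have hT : Tendsto (fun t : ℝ =>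
      (∑' n : ℤ, (n : ℝ) ^ 2 *
        ‖(NormedSpace.exp (((t : ℂ) * Complex.I) • A) ψ : ∀ _ : ℤ, ℂ) n‖ ^ 2) / t ^ 2)
      atTop (nhds (‖β‖ ^ 2)) := Filter.Tendsto.congr' (Filter.EventuallyEq.symm heq) hF
  have hval : 2 * ‖ψ‖ ^ 2 -
      (∑' n : ℤ, (starRingEnd ℂ) ((ψ : ∀ _ : ℤ, ℂ) n) *
        ((ψ : ∀ _ : ℤ, ℂ) (n - 2) + (ψ : ∀ _ : ℤ, ℂ) (n + 2))).re = ‖β‖ ^ 2 := by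
    rw [hre, hβsq]
  refine ⟨?_, ?_⟩
  · rw [hval]; exact hT
  · intro hψ
    rw [hval]
    have hβne : β ≠ 0 := by
      intro hb0
      have h5 : ∀ n : ℤ, (ψ : ∀ _ : ℤ, ℂ) (n - 1) = (ψ : ∀ _ : ℤ, ℂ) (n + 1) := by
        intro n
        have h6 := hβ n
        rw [hb0, lp.coeFn_zero, Pi.zero_apply] at h6
        exact (sub_eq_zero.1 h6.symm)
      have hper : ∀ n : ℤ, (ψ : ∀ _ : ℤ, ℂ) (n + 2) = (ψ : ∀ _ : ℤ, ℂ) n := by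
        intro n
        have h7 := h5 (n + 1)
        rw [show n + 1 - 1 = n from by ring, show n + 1 + 1 = n + 2 from by ring] at h7
        exact h7.symm
      have hex : ∃ n : ℤ, (ψ : ∀ _ : ℤ, ℂ) n ≠ 0 := by
        by_contra h
        push_neg at h
        exact hψ (lp.ext (funext fun n => by simpa using h n))
      obtain ⟨n₀, hn₀⟩ := hex
      have hiter : ∀ k : ℕ, (ψ : ∀ _ : ℤ, ℂ) (n₀ + 2 * (k:ℤ)) = (ψ : ∀ _ : ℤ, ℂ) n₀ := by
        intro k
        induction k with
        | zero => rw [show n₀ + 2 * ((0:ℕ):ℤ) = n₀ by simp]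
        | succ k ih =>
          have h8 := hper (n₀ + 2 * (k:ℤ))
          rw [ih] at h8
          have h9 : n₀ + 2 * ((k:ℤ) + 1) = n₀ + 2 * (k:ℤ) + 2 := by ring
          rw [show ((k+1:ℕ):ℤ) = (k:ℤ) + 1 from by push_cast; ring, h9, h8]
      have hinj : Function.Injective (fun k : ℕ => n₀ + 2 * (k:ℤ)) := by
        intro a b hab
        simp only at hab
        omega
      have hsumm := (summable_sq ψ).comp_injective hinj
      have hconst : Summable (fun _ : ℕ => ‖(ψ : ∀ _ : ℤ, ℂ) n₀‖ ^ 2) := by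
        refine hsumm.congr fun k => ?_
        simp [Function.comp, hiter k]
      rw [summable_const_iff] at hconst
      exact hn₀ (by simpa using hconst)
    exact pow_pos (norm_pos_iff.2 hβne) 2

end AuxBallistic
end
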